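/- Let ‖·‖ be a norm on ℝ^d whose closed unit ball is strictly convex, and let ‖·‖₂ denote the Euclidean norm. Then a set Θ ⊆ ℝ^d is permeable with respect to ‖·‖ if and only if it is permeable with respect to ‖·‖₂. The same equivalence holds for finite permeability and for null permeability. -/

import Mathlib

open Set
open scoped ENNReal RealInnerProductSpace

/-- The length (total variation w.r.t. the norm-like function `N`) of a path `γ` over
`[a,b]`, as the supremum over partitions `a = t₀ ≤ t₁ ≤ … ≤ tₙ = b` of the sums of
`N`-norms of increments. -/
noncomputable def lenWith {d : ℕ} (N : EuclideanSpace ℝ (Fin d) → ℝ)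
    (γ : ℝ → EuclideanSpace ℝ (Fin d)) (a b : ℝ) : ℝ≥0∞ :=
  ⨆ n : ℕ, ⨆ t : {t : ℕ → ℝ // Monotone t ∧ t 0 = a ∧ t n = b},
    ∑ i ∈ Finset.range n, ENNReal.ofReal (N (γ (t.1 (i + 1)) - γ (t.1 i)))

/-- `Θ ⊆ ℝ^d` is null permeable w.r.t. the norm `N`. -/
def NullPermeableWith {d : ℕ} (N : EuclideanSpace ℝ (Fin d) → ℝ)
    (Θ : Set (EuclideanSpace ℝ (Fin d))) : Prop :=
  ∀ x y : EuclideanSpace ℝ (Fin d), ∀ δ : ℝ, 0 < δ →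
    ∃ (a b : ℝ) (γ : ℝ → EuclideanSpace ℝ (Fin d)),
      a < b ∧ ContinuousOn γ (Set.Icc a b) ∧ γ a = x ∧ γ b = y ∧
      lenWith N γ a b ≤ ENNReal.ofReal (N (y - x) + δ) ∧
      γ '' Set.Icc a b ∩ Θ ⊆ {x, y}

/-- `Θ ⊆ ℝ^d` is finitely permeable w.r.t. the norm `N`. -/
def FinitelyPermeableWith {d : ℕ} (N : EuclideanSpace ℝ (Fin d) → ℝ)
    (Θ : Set (EuclideanSpace ℝ (Fin d))) : Prop :=
  ∀ x y : EuclideanSpace ℝ (Fin d), ∀ δ : ℝ, 0 < δ →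
    ∃ (a b : ℝ) (γ : ℝ → EuclideanSpace ℝ (Fin d)),
      a < b ∧ ContinuousOn γ (Set.Icc a b) ∧ γ a = x ∧ γ b = y ∧
      lenWith N γ a b ≤ ENNReal.ofReal (N (y - x) + δ) ∧
      (γ '' Set.Icc a b ∩ Θ).Finite

/-- `Θ ⊆ ℝ^d` is permeable w.r.t. the norm `N`. -/
def PermeableWith {d : ℕ} (N : EuclideanSpace ℝ (Fin d) → ℝ)
    (Θ : Set (EuclideanSpace ℝ (Fin d))) : Prop :=
  ∀ x y : EuclideanSpace ℝ (Fin d), ∀ δ : ℝ, 0 < δ →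
    ∃ (a b : ℝ) (γ : ℝ → EuclideanSpace ℝ (Fin d)),
      a < b ∧ ContinuousOn γ (Set.Icc a b) ∧ γ a = x ∧ γ b = y ∧
      lenWith N γ a b ≤ ENNReal.ofReal (N (y - x) + δ) ∧
      (closure (γ '' Set.Icc a b ∩ Θ)).Countable


private lemma permeAux_nonneg {d : ℕ} {N : EuclideanSpace ℝ (Fin d) → ℝ}
    (hN0 : ∀ x, N x = 0 ↔ x = 0)
    (hNsmul : ∀ (c : ℝ) (x), N (c • x) = |c| * N x)
    (hNadd : ∀ x y, N (x + y) ≤ N x + N y) : ∀ u, 0 ≤ N u := by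
  intro u
  have h0 : N 0 = 0 := (hN0 0).mpr rfl
  have hneg : N (-u) = N u := by
    have h := hNsmul (-1) u
    simpa using h
  have h := hNadd u (-u)
  simp only [add_neg_cancel, h0, hneg] at h
  linarith

private lemma permeAux_continuous {d : ℕ} {N : EuclideanSpace ℝ (Fin d) → ℝ}
    (hNsmul : ∀ (c : ℝ) (x), N (c • x) = |c| * N x)
    (hNadd : ∀ x y, N (x + y) ≤ N x + N y) : Continuous N := by
  have hconv : ConvexOn ℝ Set.univ N := by
    refine ⟨convex_univ, ?_⟩
    intro p _ q _ a b ha hb hab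
    calc N (a • p + b • q) ≤ N (a • p) + N (b • q) := hNadd _ _
      _ = a * N p + b * N q := by
          rw [hNsmul, hNsmul, abs_of_nonneg ha, abs_of_nonneg hb]
      _ = a • N p + b • N q := by simp [smul_eq_mul]
  exact hconv.locallyLipschitz.continuous

private lemma permeAux_lower {d : ℕ} {N : EuclideanSpace ℝ (Fin d) → ℝ}
    (hN0 : ∀ x, N x = 0 ↔ x = 0)
    (hNsmul : ∀ (c : ℝ) (x), N (c • x) = |c| * N x)
    (hNadd : ∀ x y, N (x + y) ≤ N x + N y)
    (v : EuclideanSpace ℝ (Fin d)) (hv : v ≠ 0) :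
    ∃ c > 0, ∀ u, c * ‖u‖ ≤ N u := by
  have hNnn := permeAux_nonneg hN0 hNsmul hNadd
  have hcont := permeAux_continuous hNsmul hNadd
  have hsph : (Metric.sphere (0 : EuclideanSpace ℝ (Fin d)) 1).Nonempty := by
    refine ⟨‖v‖⁻¹ • v, ?_⟩
    have hnv : ‖v‖ ≠ 0 := norm_ne_zero_iff.mpr hv
    simp [norm_smul, abs_of_nonneg, inv_mul_cancel₀ hnv]
  obtain ⟨u₀, hu₀mem, hu₀min⟩ :=
    (isCompact_sphere (0 : EuclideanSpace ℝ (Fin d)) 1).exists_isMinOn hsph hcont.continuousOn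
  have hu₀norm : ‖u₀‖ = 1 := by simpa using hu₀mem
  have hu₀ne : u₀ ≠ 0 := by
    intro h; rw [h] at hu₀norm; simp at hu₀norm
  have hc : 0 < N u₀ :=
    lt_of_le_of_ne (hNnn u₀) (fun h => hu₀ne ((hN0 u₀).mp h.symm))
  refine ⟨N u₀, hc, fun u => ?_⟩
  rcases eq_or_ne u 0 with rfl | hu
  · simp [(hN0 0).mpr rfl]
  · have hnu : 0 < ‖u‖ := norm_pos_iff.mpr hu
    have hmem : ‖u‖⁻¹ • u ∈ Metric.sphere (0 : EuclideanSpace ℝ (Fin d)) 1 := by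
      simp [norm_smul, abs_of_nonneg (inv_nonneg.mpr hnu.le), inv_mul_cancel₀ hnu.ne']
    have hmin : N u₀ ≤ N (‖u‖⁻¹ • u) := hu₀min hmem
    have h1 : N u = ‖u‖ * N (‖u‖⁻¹ • u) := by
      have he : u = ‖u‖ • (‖u‖⁻¹ • u) := by
        rw [smul_smul, mul_inv_cancel₀ hnu.ne', one_smul]
      conv_lhs => rw [he]
      rw [hNsmul, abs_of_pos hnu]
    nlinarith

set_option maxHeartbeats 1000000 in
private lemma permeAux_key {d : ℕ} (N M : EuclideanSpace ℝ (Fin d) → ℝ)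
    (hN0 : ∀ x, N x = 0 ↔ x = 0)
    (hNsmul : ∀ (c : ℝ) (x), N (c • x) = |c| * N x)
    (hNadd : ∀ x y, N (x + y) ≤ N x + N y)
    (hconv : ∀ x y, N x = 1 → N y = 1 → x ≠ y → N ((2 : ℝ)⁻¹ • (x + y)) < 1)
    (hM0 : ∀ x, M x = 0 ↔ x = 0)
    (hMsmul : ∀ (c : ℝ) (x), M (c • x) = |c| * M x)
    (hMadd : ∀ x y, M (x + y) ≤ M x + M y)
    (x y : EuclideanSpace ℝ (Fin d)) (hxy : x ≠ y) (δ : ℝ) (hδ : 0 < δ) :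
    ∃ δ' > 0, ∀ (a b : ℝ) (γ : ℝ → EuclideanSpace ℝ (Fin d)), γ a = x → γ b = y →
      lenWith N γ a b ≤ ENNReal.ofReal (N (y - x) + δ') →
      lenWith M γ a b ≤ ENNReal.ofReal (M (y - x) + δ) := by
  set w := y - x with hw_def
  have hw : w ≠ 0 := sub_ne_zero.mpr (Ne.symm hxy)
  have hNnn := permeAux_nonneg hN0 hNsmul hNadd
  have hMnn := permeAux_nonneg hM0 hMsmul hMadd
  have hNcont := permeAux_continuous hNsmul hNadd
  have hMcont := permeAux_continuous hMsmul hMadd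
  obtain ⟨c, hcpos, hclow⟩ := permeAux_lower hN0 hNsmul hNadd w hw
  have hNw : 0 < N w := lt_of_le_of_ne (hNnn w) (fun h => hw ((hN0 w).mp h.symm))
  -- Hahn-Banach support functional
  have hfle0 : ∀ z : (LinearPMap.mkSpanSingleton w (N w) hw :
      EuclideanSpace ℝ (Fin d) →ₗ.[ℝ] ℝ).domain,
      (LinearPMap.mkSpanSingleton w (N w) hw) z ≤ N z := by
    rintro ⟨z, hz⟩
    obtain ⟨cz, rfl⟩ := Submodule.mem_span_singleton.mp hz
    rw [LinearPMap.mkSpanSingleton'_apply, smul_eq_mul, RingHom.id_apply, hNsmul]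
    have h1 : cz ≤ |cz| := le_abs_self cz
    nlinarith [hNnn w]
  obtain ⟨f, hfext, hfle⟩ := exists_extension_of_le_sublinear
    (LinearPMap.mkSpanSingleton w (N w) hw) N
    (fun c hc u => by rw [hNsmul, abs_of_pos hc]) hNadd hfle0
  have hfw : f w = N w := by
    have h := hfext ⟨w, Submodule.mem_span_singleton_self w⟩
    rwa [LinearPMap.mkSpanSingleton_apply] at h
  have hfcont : Continuous f := f.continuous_of_finiteDimensional
  set lam := M w / N w with hlam
  set ε := δ / (2 * N w) with hε
  have hεpos : 0 < ε := by positivity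
  set K := {u : EuclideanSpace ℝ (Fin d) | N u = 1} with hK
  have hKclosed : IsClosed K := isClosed_eq hNcont continuous_const
  have hKcpt : IsCompact K := by
    refine Metric.isCompact_of_isClosed_isBounded hKclosed
      ((Metric.isBounded_closedBall (x := (0 : EuclideanSpace ℝ (Fin d))) (r := c⁻¹)).subset ?_)
    intro u hu
    have h1 : N u = 1 := hu
    have h2 := hclow u
    rw [h1] at h2
    have h3 : ‖u‖ ≤ c⁻¹ := by
      nlinarith [mul_inv_cancel₀ hcpos.ne', norm_nonneg u]
    simpa [Metric.mem_closedBall, dist_zero_right] using h3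
  set u₀ := (N w)⁻¹ • w with hu₀def
  have hNu₀ : N u₀ = 1 := by
    rw [hu₀def, hNsmul, abs_of_pos (inv_pos.mpr hNw), inv_mul_cancel₀ hNw.ne']
  have hfu₀ : f u₀ = 1 := by
    rw [hu₀def, map_smul, smul_eq_mul, hfw, inv_mul_cancel₀ hNw.ne']
  have hMu₀ : M u₀ = lam := by
    rw [hu₀def, hMsmul, abs_of_pos (inv_pos.mpr hNw), hlam]
    ring
  -- ψ > 0 on A
  have hψposA : ∀ u, u ∈ K → 0 ≤ M u - (lam + ε) * f u → 0 < N u - f u := by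
    intro u huK huφ
    have hfleu : f u ≤ N u := hfle u
    rcases lt_or_eq_of_le hfleu with h | h
    · linarith
    · exfalso
      have hNu1 : N u = 1 := huK
      have hfu1 : f u = 1 := by rw [h, hNu1]
      by_cases huu : u = u₀
      · rw [huu, hMu₀, hfu₀] at huφ
        nlinarith
      · have hlt := hconv u u₀ hNu1 hNu₀ huu
        have hfm : f ((2:ℝ)⁻¹ • (u + u₀)) = 1 := by
          rw [map_smul, smul_eq_mul, map_add, hfu1, hfu₀]; norm_num
        have := hfle ((2:ℝ)⁻¹ • (u + u₀))
        linarith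
  -- a linear comparison constant
  obtain ⟨C, hC0, hCK⟩ : ∃ C : ℝ, 0 ≤ C ∧
      ∀ u ∈ K, M u - (lam + ε) * f u ≤ C * (N u - f u) := by
    set A := K ∩ {u | 0 ≤ M u - (lam + ε) * f u} with hA_def
    have hφcont : Continuous fun u => M u - (lam + ε) * f u :=
      hMcont.sub (continuous_const.mul hfcont)
    have hAcpt : IsCompact A :=
      hKcpt.inter_right (isClosed_le continuous_const hφcont)
    rcases A.eq_empty_or_nonempty with hA | hA
    · refine ⟨0, le_refl _, fun u huK => ?_⟩
      by_contra h
      push_neg at h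
      rw [zero_mul] at h
      have hmem : u ∈ A := ⟨huK, h.le⟩
      rw [hA] at hmem
      exact hmem
    · obtain ⟨um, humA, hum⟩ := hAcpt.exists_isMinOn hA
        ((hNcont.sub hfcont).continuousOn)
      obtain ⟨uM, huMA, huM⟩ := hAcpt.exists_isMaxOn hA hφcont.continuousOn
      have hmpos : 0 < N um - f um := hψposA um humA.1 humA.2
      have hB0 : 0 ≤ M uM - (lam + ε) * f uM := by
        have h1 := huM humA
        have h2 := humA.2
        exact le_trans h2 h1
      refine ⟨(M uM - (lam + ε) * f uM) / (N um - f um),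
        div_nonneg hB0 hmpos.le, fun u huK => ?_⟩
      by_cases hu : 0 ≤ M u - (lam + ε) * f u
      · have huA : u ∈ A := ⟨huK, hu⟩
        have h1 : M u - (lam + ε) * f u ≤ M uM - (lam + ε) * f uM := huM huA
        have h2 : N um - f um ≤ N u - f u := hum huA
        calc M u - (lam + ε) * f u ≤ M uM - (lam + ε) * f uM := h1
          _ = (M uM - (lam + ε) * f uM) / (N um - f um) * (N um - f um) := by
              field_simp
          _ ≤ (M uM - (lam + ε) * f uM) / (N um - f um) * (N u - f u) :=
              mul_le_mul_of_nonneg_left h2 (div_nonneg hB0 hmpos.le)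
      · push_neg at hu
        have h2 : 0 ≤ (M uM - (lam + ε) * f uM) / (N um - f um) * (N u - f u) :=
          mul_nonneg (div_nonneg hB0 hmpos.le) (by linarith [hfle u])
        linarith
  -- global pointwise inequality
  have hglob : ∀ u, M u ≤ (lam + ε) * f u + C * (N u - f u) := by
    intro u
    rcases eq_or_ne u 0 with rfl | hu
    · simp [(hM0 0).mpr rfl, (hN0 0).mpr rfl]
    · have hNu : 0 < N u := lt_of_le_of_ne (hNnn u) (fun h => hu ((hN0 u).mp h.symm))
      set v := (N u)⁻¹ • u with hv
      have hvK : v ∈ K := by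
        show N v = 1
        rw [hv, hNsmul, abs_of_pos (inv_pos.mpr hNu), inv_mul_cancel₀ hNu.ne']
      have h := hCK v hvK
      have hNv : N v = 1 := hvK
      have hu_eq : u = (N u) • v := by
        rw [hv, smul_smul, mul_inv_cancel₀ hNu.ne', one_smul]
      have hMu : M u = N u * M v := by
        conv_lhs => rw [hu_eq]
        rw [hMsmul, abs_of_pos hNu]
      have hfu : f u = N u * f v := by
        conv_lhs => rw [hu_eq]
        rw [map_smul, smul_eq_mul]
      have hNu_eq : N u = N u * N v := by rw [hNv, mul_one]
      rw [hMu, hfu]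
      calc N u * M v ≤ N u * ((lam + ε) * f v + C * (N v - f v)) := by nlinarith
        _ = (lam + ε) * (N u * f v) + C * (N u * N v - N u * f v) := by ring
        _ = (lam + ε) * (N u * f v) + C * (N u - N u * f v) := by rw [← hNu_eq]
  refine ⟨δ / (2 * (C + 1)), by positivity, ?_⟩
  intro a b γ hga hgb hlen
  have key_sum : ∀ (n : ℕ) (t : {t : ℕ → ℝ // Monotone t ∧ t 0 = a ∧ t n = b}),
      (∑ i ∈ Finset.range n, ENNReal.ofReal (M (γ (t.1 (i + 1)) - γ (t.1 i)))) ≤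
        ENNReal.ofReal (M w + δ) := by
    rintro n ⟨t, hmono, ht0, htn⟩
    set SN := ∑ i ∈ Finset.range n, N (γ (t (i + 1)) - γ (t i)) with hSN
    set Sf := ∑ i ∈ Finset.range n, f (γ (t (i + 1)) - γ (t i)) with hSf
    set SM := ∑ i ∈ Finset.range n, M (γ (t (i + 1)) - γ (t i)) with hSM
    have hNsum_le : SN ≤ N w + δ / (2 * (C + 1)) := by
      have h1 : (∑ i ∈ Finset.range n,
          ENNReal.ofReal (N (γ (t (i + 1)) - γ (t i)))) ≤ lenWith N γ a b := by
        rw [lenWith]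
        exact le_iSup_of_le n (le_iSup_of_le ⟨t, hmono, ht0, htn⟩ le_rfl)
      have h2 := le_trans h1 hlen
      rw [← ENNReal.ofReal_sum_of_nonneg (fun i _ => hNnn (γ (t (i + 1)) - γ (t i)))] at h2
      exact (ENNReal.ofReal_le_ofReal_iff
        (add_nonneg (hNnn w) (by positivity))).mp h2
    have hfsum : Sf = f w := by
      rw [hSf]
      calc ∑ i ∈ Finset.range n, f (γ (t (i + 1)) - γ (t i))
          = ∑ i ∈ Finset.range n, (f (γ (t (i + 1))) - f (γ (t i))) := by
            simp [map_sub]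
        _ = f (γ (t n)) - f (γ (t 0)) := Finset.sum_range_sub (fun i => f (γ (t i))) n
        _ = f w := by rw [ht0, htn, hga, hgb, ← map_sub]
    have hMsum : SM ≤ M w + δ := by
      have h3 : SM ≤ (lam + ε) * Sf + C * (SN - Sf) := by
        rw [hSM, hSf, hSN]
        calc ∑ i ∈ Finset.range n, M (γ (t (i + 1)) - γ (t i))
            ≤ ∑ i ∈ Finset.range n, ((lam + ε) * f (γ (t (i + 1)) - γ (t i)) +
              C * (N (γ (t (i + 1)) - γ (t i)) - f (γ (t (i + 1)) - γ (t i)))) :=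
              Finset.sum_le_sum (fun i _ => hglob _)
          _ = _ := by
              rw [Finset.sum_add_distrib, ← Finset.mul_sum, ← Finset.mul_sum,
                Finset.sum_sub_distrib]
      rw [hfsum, hfw] at h3
      have h4 : C * (SN - N w) ≤ C * (δ / (2 * (C + 1))) :=
        mul_le_mul_of_nonneg_left (by linarith) hC0
      have h5 : (lam + ε) * N w = M w + δ / 2 := by
        rw [add_mul, hlam, hε, div_mul_cancel₀ _ hNw.ne']
        field_simp
      have hCd : C * (δ / (2 * (C + 1))) ≤ δ / 2 := by
        rw [mul_div_assoc', div_le_div_iff₀ (by positivity) (by norm_num : (0:ℝ) < 2)]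
        nlinarith
      linarith
    calc (∑ i ∈ Finset.range n, ENNReal.ofReal (M (γ (t (i + 1)) - γ (t i))))
        = ENNReal.ofReal SM := by
          rw [hSM, ← ENNReal.ofReal_sum_of_nonneg (fun i _ => hMnn _)]
      _ ≤ ENNReal.ofReal (M w + δ) := ENNReal.ofReal_le_ofReal hMsum
  rw [lenWith]
  exact iSup_le fun n => iSup_le fun t => key_sum n t

private lemma permeAux_const_len {d : ℕ} (M : EuclideanSpace ℝ (Fin d) → ℝ)
    (hM0 : ∀ x, M x = 0 ↔ x = 0) (x : EuclideanSpace ℝ (Fin d)) (r : ℝ) (hr : 0 ≤ r) :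
    lenWith M (fun _ => x) 0 1 ≤ ENNReal.ofReal (M (x - x) + r) := by
  rw [lenWith]
  refine iSup_le fun n => iSup_le fun t => ?_
  have hz : ∀ i ∈ Finset.range n,
      ENNReal.ofReal (M ((fun _ => x) (t.1 (i + 1)) - (fun _ => x) (t.1 i))) = 0 := by
    intro i _
    simp [sub_self, (hM0 0).mpr rfl]
  rw [Finset.sum_eq_zero hz]
  exact zero_le

private lemma permeAux_const_img {d : ℕ} (x : EuclideanSpace ℝ (Fin d)) :
    (fun _ : ℝ => x) '' Set.Icc 0 1 ⊆ {x} := by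
  rintro _ ⟨t, _, rfl⟩
  rfl

private lemma permeAux_transfer {d : ℕ} (N M : EuclideanSpace ℝ (Fin d) → ℝ)
    (hN0 : ∀ x, N x = 0 ↔ x = 0)
    (hNsmul : ∀ (c : ℝ) (x), N (c • x) = |c| * N x)
    (hNadd : ∀ x y, N (x + y) ≤ N x + N y)
    (hconv : ∀ x y, N x = 1 → N y = 1 → x ≠ y → N ((2 : ℝ)⁻¹ • (x + y)) < 1)
    (hM0 : ∀ x, M x = 0 ↔ x = 0)
    (hMsmul : ∀ (c : ℝ) (x), M (c • x) = |c| * M x)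
    (hMadd : ∀ x y, M (x + y) ≤ M x + M y)
    (Θ : Set (EuclideanSpace ℝ (Fin d))) :
    (PermeableWith N Θ → PermeableWith M Θ) ∧
    (FinitelyPermeableWith N Θ → FinitelyPermeableWith M Θ) ∧
    (NullPermeableWith N Θ → NullPermeableWith M Θ) := by
  refine ⟨fun h x y δ hδ => ?_, fun h x y δ hδ => ?_, fun h x y δ hδ => ?_⟩ <;>
    rcases eq_or_ne x y with rfl | hxy
  · refine ⟨0, 1, fun _ => x, one_pos, continuousOn_const, rfl, rfl,
      permeAux_const_len M hM0 x δ hδ.le, ?_⟩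
    have h1 : closure ((fun _ : ℝ => x) '' Set.Icc 0 1 ∩ Θ) ⊆ {x} :=
      closure_minimal (fun z hz => permeAux_const_img x hz.1) isClosed_singleton
    exact (Set.countable_singleton x).mono h1
  · obtain ⟨δ', hδ'pos, hkey⟩ := permeAux_key N M hN0 hNsmul hNadd hconv hM0 hMsmul hMadd
      x y hxy δ hδ
    obtain ⟨a, b, γ, hab, hcont, hga, hgb, hlen, hset⟩ := h x y δ' hδ'pos
    exact ⟨a, b, γ, hab, hcont, hga, hgb, hkey a b γ hga hgb hlen, hset⟩
  · refine ⟨0, 1, fun _ => x, one_pos, continuousOn_const, rfl, rfl,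
      permeAux_const_len M hM0 x δ hδ.le, ?_⟩
    exact (Set.finite_singleton x).subset (fun z hz => permeAux_const_img x hz.1)
  · obtain ⟨δ', hδ'pos, hkey⟩ := permeAux_key N M hN0 hNsmul hNadd hconv hM0 hMsmul hMadd
      x y hxy δ hδ
    obtain ⟨a, b, γ, hab, hcont, hga, hgb, hlen, hset⟩ := h x y δ' hδ'pos
    exact ⟨a, b, γ, hab, hcont, hga, hgb, hkey a b γ hga hgb hlen, hset⟩
  · refine ⟨0, 1, fun _ => x, one_pos, continuousOn_const, rfl, rfl,
      permeAux_const_len M hM0 x δ hδ.le, ?_⟩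
    exact fun z hz => Or.inl (permeAux_const_img x hz.1)
  · obtain ⟨δ', hδ'pos, hkey⟩ := permeAux_key N M hN0 hNsmul hNadd hconv hM0 hMsmul hMadd
      x y hxy δ hδ
    obtain ⟨a, b, γ, hab, hcont, hga, hgb, hlen, hset⟩ := h x y δ' hδ'pos
    exact ⟨a, b, γ, hab, hcont, hga, hgb, hkey a b γ hga hgb hlen, hset⟩

private lemma permeAux_euclid_conv {d : ℕ} :
    ∀ x y : EuclideanSpace ℝ (Fin d), ‖x‖ = 1 → ‖y‖ = 1 → x ≠ y →
      ‖(2 : ℝ)⁻¹ • (x + y)‖ < 1 := by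
  intro x y hx hy hxy
  have hinner : ⟪x, y⟫ < 1 := by
    refine lt_of_le_of_ne ?_ fun h => hxy ((inner_eq_one_iff_of_norm_eq_one hx hy).mp h)
    have := real_inner_le_norm x y
    rwa [hx, hy, one_mul] at this
  have hsq : ‖x + y‖ ^ 2 = 2 + 2 * ⟪x, y⟫ := by
    rw [@norm_add_sq_real, hx, hy]; ring
  have h2 : ‖x + y‖ < 2 := by nlinarith [norm_nonneg (x + y)]
  rw [norm_smul, Real.norm_eq_abs]
  rw [abs_of_pos (by norm_num : (0:ℝ) < (2:ℝ)⁻¹)]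
  linarith

/-- If `N` is a norm on `ℝ^d` whose closed unit ball is strictly convex, then a set
`Θ ⊆ ℝ^d` is permeable w.r.t. `N` iff it is permeable w.r.t. the Euclidean norm, and the
same equivalence holds for finite permeability and null permeability. -/
theorem permeable_iff_of_strictly_convex_norm {d : ℕ}
    (N : EuclideanSpace ℝ (Fin d) → ℝ)
    (hN0 : ∀ x, N x = 0 ↔ x = 0)
    (hNsmul : ∀ (c : ℝ) (x), N (c • x) = |c| * N x)
    (hNadd : ∀ x y, N (x + y) ≤ N x + N y)
    (hconv : ∀ x y, N x = 1 → N y = 1 → x ≠ y → N ((2 : ℝ)⁻¹ • (x + y)) < 1)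
    (Θ : Set (EuclideanSpace ℝ (Fin d))) :
    (PermeableWith N Θ ↔ PermeableWith (fun v => ‖v‖) Θ) ∧
    (FinitelyPermeableWith N Θ ↔ FinitelyPermeableWith (fun v => ‖v‖) Θ) ∧
    (NullPermeableWith N Θ ↔ NullPermeableWith (fun v => ‖v‖) Θ) := by
  have hE0 : ∀ v : EuclideanSpace ℝ (Fin d), ‖v‖ = 0 ↔ v = 0 := fun v => norm_eq_zero
  have hEsmul : ∀ (c : ℝ) (v : EuclideanSpace ℝ (Fin d)), ‖c • v‖ = |c| * ‖v‖ := by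
    intro c v; rw [norm_smul, Real.norm_eq_abs]
  have hEadd : ∀ v u : EuclideanSpace ℝ (Fin d), ‖v + u‖ ≤ ‖v‖ + ‖u‖ := norm_add_le
  obtain ⟨h1, h2, h3⟩ := permeAux_transfer N (fun v => ‖v‖) hN0 hNsmul hNadd hconv
    hE0 hEsmul hEadd Θ
  obtain ⟨h1', h2', h3'⟩ := permeAux_transfer (fun v => ‖v‖) N hE0 hEsmul hEadd
    permeAux_euclid_conv hN0 hNsmul hNadd Θ
  exact ⟨⟨h1, h1'⟩, ⟨h2, h2'⟩, ⟨h3, h3'⟩⟩
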